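/- Let q ∈ S_n with coordinates η_q and θ_q. Then the Hessian of the loss L_q in η coordinates evaluated at the optimum η_q equals ∇²φ(η_q), the Hessian of L_q in θ coordinates evaluated at θ_q equals ∇²ψ(θ_q), these two matrices are inverse to each other, and ∇²L_q(η_q) − I is positive definite; equivalently, I − ∇²L_q(θ_q) is positive definite. -/

import Mathlib

open Filter

noncomputable section

abbrev E (n : ℕ) := EuclideanSpace ℝ (Fin n)

/-- The open probability simplex `S_n` inside `ℝ^{n+1}`. -/
def simplex (n : ℕ) : Set (Fin (n+1) → ℝ) :=
  {p | (∀ i, 0 < p i) ∧ ∑ i, p i = 1}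

/-- The mixture (`η`) coordinate domain `Δ_n`. -/
def Δset (n : ℕ) : Set (E n) := {η | (∀ i, 0 < η i) ∧ ∑ i, η i < 1}

/-- The distribution in `S_n` corresponding to `η` coordinates. -/
def mixDist {n : ℕ} (η : E n) : Fin (n+1) → ℝ :=
  Fin.snoc (fun i => η i) (1 - ∑ i, η i)

/-- The distribution in `S_n` corresponding to `θ` coordinates. -/
def expDist {n : ℕ} (θ : E n) : Fin (n+1) → ℝ :=
  Fin.snoc (fun i => Real.exp (θ i) / (1 + ∑ j, Real.exp (θ j)))
    (1 / (1 + ∑ j, Real.exp (θ j)))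

/-- The `η` coordinates of a distribution `q ∈ S_n`. -/
def etaCoord {n : ℕ} (q : Fin (n+1) → ℝ) : E n := WithLp.toLp 2 (fun i => q i.castSucc)

/-- The `θ` coordinates of a distribution `q ∈ S_n`. -/
def thetaCoord {n : ℕ} (q : Fin (n+1) → ℝ) : E n :=
  WithLp.toLp 2 (fun i => Real.log (q i.castSucc / q (Fin.last n)))

/-- Kullback–Leibler divergence `D(q‖p)`. -/
def KL {n : ℕ} (q p : Fin (n+1) → ℝ) : ℝ := ∑ i, q i * Real.log (q i / p i)

/-- Log-partition function `ψ(θ) = log(1 + Σ e^{θ_i})`. -/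
def psi {n : ℕ} (θ : E n) : ℝ := Real.log (1 + ∑ i, Real.exp (θ i))

/-- Negative entropy `φ(η)`. -/
def phi {n : ℕ} (η : E n) : ℝ :=
  (∑ i, η i * Real.log (η i)) + (1 - ∑ i, η i) * Real.log (1 - ∑ i, η i)

/-- The loss `L_q` in `η` coordinates: `η ↦ D(q ‖ p(η))`. -/
def Leta {n : ℕ} (q : Fin (n+1) → ℝ) (η : E n) : ℝ := KL q (mixDist η)

/-- The loss `L_q` in `θ` coordinates: `θ ↦ D(q ‖ p(θ))`. -/
def Ltheta {n : ℕ} (q : Fin (n+1) → ℝ) (θ : E n) : ℝ := KL q (expDist θ)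

/-- The Hessian of `f : ℝⁿ → ℝ` at `x`, as the `n × n` matrix of second partial
derivatives. -/
def hess {n : ℕ} (f : E n → ℝ) (x : E n) : Matrix (Fin n) (Fin n) ℝ :=
  Matrix.of fun i j =>
    fderiv ℝ (fun y => fderiv ℝ f y (EuclideanSpace.single j 1)) x (EuclideanSpace.single i 1)

/-- The set of (real) eigenvalues of a matrix. -/
def lamSet {n : ℕ} (A : Matrix (Fin n) (Fin n) ℝ) : Set ℝ :=
  {μ | ∃ v : Fin n → ℝ, v ≠ 0 ∧ A.mulVec v = μ • v}

/-- Largest eigenvalue `λ_max`. -/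
def lamMax {n : ℕ} (A : Matrix (Fin n) (Fin n) ℝ) : ℝ := sSup (lamSet A)

/-- Smallest eigenvalue `λ_min`. -/
def lamMin {n : ℕ} (A : Matrix (Fin n) (Fin n) ℝ) : ℝ := sInf (lamSet A)

/-- Condition number `cond(A) = λ_max(A)/λ_min(A)`. -/
def condNum {n : ℕ} (A : Matrix (Fin n) (Fin n) ℝ) : ℝ := lamMax A / lamMin A

/-- Operator 2-norm of a matrix (induced by the Euclidean norm). -/
def opNorm {n : ℕ} (A : Matrix (Fin n) (Fin n) ℝ) : ℝ :=
  ‖Matrix.toEuclideanCLM (𝕜 := ℝ) A‖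


variable {n : ℕ}

def sCLM (n : ℕ) : E n →L[ℝ] ℝ := ∑ i, EuclideanSpace.proj i

lemma sCLM_apply (v : E n) : sCLM n v = ∑ i, v i := by
  simp [sCLM]

lemma proj_single (i j : Fin n) :
    (EuclideanSpace.proj (𝕜 := ℝ) j) (EuclideanSpace.single i (1:ℝ)) = if i = j then 1 else 0 := by
  simp [EuclideanSpace.single_apply, eq_comm]

lemma sCLM_single (i : Fin n) : sCLM n (EuclideanSpace.single i (1:ℝ)) = 1 := by
  simp [sCLM_apply, EuclideanSpace.single_apply]

lemma hasF_proj (j : Fin n) (y : E n) :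
    HasFDerivAt (fun y : E n => y j) (EuclideanSpace.proj (𝕜 := ℝ) j) y := by
  have h : (fun y : E n => y j) = ⇑(EuclideanSpace.proj (𝕜 := ℝ) (ι := Fin n) j) := by
    funext v; simp
  rw [h]; exact (EuclideanSpace.proj (𝕜 := ℝ) (ι := Fin n) j).hasFDerivAt

lemma hasF_sum (y : E n) : HasFDerivAt (fun y : E n => ∑ i, y i) (sCLM n) y := by
  have h : (fun y : E n => ∑ i, y i) = ⇑(sCLM n) := by
    funext v; rw [sCLM_apply]
  rw [h]; exact (sCLM n).hasFDerivAt

section grads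
variable (q : Fin (n+1) → ℝ)

/-- Nice closed form of `Leta` away from the boundary. -/
def Feta (q : Fin (n+1) → ℝ) (y : E n) : ℝ :=
  ((∑ i, q i * Real.log (q i)) - ∑ k : Fin n, q k.castSucc * Real.log (y k))
    - q (Fin.last n) * Real.log (1 - ∑ i, y i)

lemma fderiv_Feta_single {y : E n} (hy : ∀ i, y i ≠ 0) (hs : 1 - ∑ i, y i ≠ 0) (j : Fin n) :
    fderiv ℝ (Feta q) y (EuclideanSpace.single j 1)
      = -(q j.castSucc) * (y j)⁻¹ + q (Fin.last n) * (1 - ∑ i, y i)⁻¹ := by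
  have h2 : HasFDerivAt (fun y : E n => ∑ k : Fin n, q k.castSucc * Real.log (y k))
      (∑ k : Fin n, q k.castSucc • ((y k)⁻¹ • EuclideanSpace.proj (𝕜 := ℝ) k)) y :=
    HasFDerivAt.fun_sum (fun k _ =>
      ((Real.hasDerivAt_log (hy k)).comp_hasFDerivAt (f := fun y : E n => y k) y (hasF_proj k y)).const_mul _)
  have h4 : HasFDerivAt (fun y : E n => Real.log (1 - ∑ i, y i))
      ((1 - ∑ i, y i)⁻¹ • -(sCLM n)) y :=
    (Real.hasDerivAt_log hs).comp_hasFDerivAt (f := fun y : E n => 1 - ∑ i, y i) y ((hasF_sum y).const_sub 1)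
  have h6 := ((hasFDerivAt_const (∑ i, q i * Real.log (q i)) y).sub h2).sub
    (h4.const_mul (q (Fin.last n)))
  have h7 : fderiv ℝ (Feta q) y = _ := h6.fderiv
  rw [h7]
  simp only [ContinuousLinearMap.sub_apply, ContinuousLinearMap.zero_apply,
    ContinuousLinearMap.coe_sum', Finset.sum_apply, ContinuousLinearMap.smul_apply,
    ContinuousLinearMap.neg_apply, proj_single, sCLM_single, smul_eq_mul,
    mul_ite, mul_zero, mul_one, Finset.sum_ite_eq', Finset.sum_ite_eq, Finset.mem_univ, if_true]
  ring
end grads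

section grads2
variable (q : Fin (n+1) → ℝ)

def gEta (q : Fin (n+1) → ℝ) (j : Fin n) (y : E n) : ℝ :=
  -(q j.castSucc) * (y j)⁻¹ + q (Fin.last n) * (1 - ∑ i, y i)⁻¹

lemma fderiv_gEta_single {y : E n} (hy : ∀ i, y i ≠ 0) (hs : 1 - ∑ i, y i ≠ 0) (i j : Fin n) :
    fderiv ℝ (gEta q j) y (EuclideanSpace.single i 1)
      = (if i = j then q j.castSucc * ((y j) ^ 2)⁻¹ else 0)
        + q (Fin.last n) * (((1 - ∑ i, y i) ^ 2)⁻¹) := by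
  have h1 : HasFDerivAt (fun y : E n => (y j)⁻¹)
      ((-((y j) ^ 2)⁻¹) • EuclideanSpace.proj (𝕜 := ℝ) j) y :=
    (hasDerivAt_inv (hy j)).comp_hasFDerivAt y (hasF_proj j y)
  have h3 : HasFDerivAt (fun y : E n => (1 - ∑ i, y i)⁻¹)
      ((-((1 - ∑ i, y i) ^ 2)⁻¹) • -(sCLM n)) y :=
    (hasDerivAt_inv hs).comp_hasFDerivAt (f := fun y : E n => 1 - ∑ i, y i) y ((hasF_sum y).const_sub 1)
  have h6 := (h1.const_mul (-(q j.castSucc))).add (h3.const_mul (q (Fin.last n)))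
  have h7 : fderiv ℝ (gEta q j) y = _ := h6.fderiv
  rw [h7]
  simp only [ContinuousLinearMap.add_apply, ContinuousLinearMap.smul_apply,
    ContinuousLinearMap.neg_apply, proj_single, sCLM_single, smul_eq_mul]
  by_cases h : i = j <;> simp [h] <;> ring

def gPhi (j : Fin n) (y : E n) : ℝ := Real.log (y j) - Real.log (1 - ∑ i, y i)

lemma fderiv_phi_single {y : E n} (hy : ∀ i, y i ≠ 0) (hs : 1 - ∑ i, y i ≠ 0) (j : Fin n) :
    fderiv ℝ (phi (n := n)) y (EuclideanSpace.single j 1) = gPhi j y := by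
  have h2 : HasFDerivAt (fun y : E n => ∑ k : Fin n, y k * Real.log (y k))
      (∑ k : Fin n, (Real.log (y k) + 1) • EuclideanSpace.proj (𝕜 := ℝ) k) y :=
    HasFDerivAt.fun_sum (fun k _ =>
      (Real.hasDerivAt_mul_log (hy k)).comp_hasFDerivAt (f := fun y : E n => y k) y (hasF_proj k y))
  have h4 : HasFDerivAt (fun y : E n => (1 - ∑ i, y i) * Real.log (1 - ∑ i, y i))
      ((Real.log (1 - ∑ i, y i) + 1) • -(sCLM n)) y :=
    (Real.hasDerivAt_mul_log hs).comp_hasFDerivAt (f := fun y : E n => 1 - ∑ i, y i) y ((hasF_sum y).const_sub 1)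
  have h6 := h2.add h4
  have h7 : fderiv ℝ (phi (n := n)) y = _ := h6.fderiv
  rw [h7]
  simp only [ContinuousLinearMap.add_apply, ContinuousLinearMap.coe_sum', Finset.sum_apply,
    ContinuousLinearMap.smul_apply, ContinuousLinearMap.neg_apply, proj_single, sCLM_single,
    smul_eq_mul, mul_ite, mul_zero, mul_one, Finset.sum_ite_eq, Finset.sum_ite_eq',
    Finset.mem_univ, if_true, gPhi]
  ring

lemma fderiv_gPhi_single {y : E n} (hy : ∀ i, y i ≠ 0) (hs : 1 - ∑ i, y i ≠ 0) (i j : Fin n) :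
    fderiv ℝ (gPhi (n := n) j) y (EuclideanSpace.single i 1)
      = (if i = j then (y j)⁻¹ else 0) + (1 - ∑ i, y i)⁻¹ := by
  have h1 : HasFDerivAt (fun y : E n => Real.log (y j))
      ((y j)⁻¹ • EuclideanSpace.proj (𝕜 := ℝ) j) y :=
    (Real.hasDerivAt_log (hy j)).comp_hasFDerivAt (f := fun y : E n => y j) y (hasF_proj j y)
  have h4 : HasFDerivAt (fun y : E n => Real.log (1 - ∑ i, y i))
      ((1 - ∑ i, y i)⁻¹ • -(sCLM n)) y :=
    (Real.hasDerivAt_log hs).comp_hasFDerivAt (f := fun y : E n => 1 - ∑ i, y i) y ((hasF_sum y).const_sub 1)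
  have h6 := h1.sub h4
  have h7 : fderiv ℝ (gPhi (n := n) j) y = _ := h6.fderiv
  rw [h7]
  simp only [ContinuousLinearMap.sub_apply, ContinuousLinearMap.smul_apply,
    ContinuousLinearMap.neg_apply, proj_single, sCLM_single, smul_eq_mul]
  by_cases h : i = j <;> simp [h] <;> ring

end grads2

section grads3
variable (q : Fin (n+1) → ℝ)

def gPsi (j : Fin n) (y : E n) : ℝ := Real.exp (y j) * (1 + ∑ i, Real.exp (y i))⁻¹

lemma expSum_pos (y : E n) : (0:ℝ) < 1 + ∑ i, Real.exp (y i) := by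
  have : (0:ℝ) ≤ ∑ i, Real.exp (y i) :=
    Finset.sum_nonneg fun i _ => (Real.exp_pos _).le
  linarith

lemma hasF_expSum (y : E n) :
    HasFDerivAt (fun y : E n => 1 + ∑ i, Real.exp (y i))
      (∑ i, Real.exp (y i) • EuclideanSpace.proj (𝕜 := ℝ) i) y :=
  (HasFDerivAt.fun_sum fun i _ =>
    (Real.hasDerivAt_exp (y i)).comp_hasFDerivAt (f := fun y : E n => y i) y (hasF_proj i y)).const_add 1

lemma fderiv_psi_single (y : E n) (j : Fin n) :
    fderiv ℝ (psi (n := n)) y (EuclideanSpace.single j 1) = gPsi j y := by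
  have h6 := (Real.hasDerivAt_log (expSum_pos y).ne').comp_hasFDerivAt y (hasF_expSum y)
  have h7 : fderiv ℝ (psi (n := n)) y = _ := h6.fderiv
  rw [h7]
  simp only [ContinuousLinearMap.smul_apply, ContinuousLinearMap.coe_sum', Finset.sum_apply,
    proj_single, smul_eq_mul, mul_ite, mul_zero, mul_one, Finset.sum_ite_eq,
    Finset.sum_ite_eq', Finset.mem_univ, if_true, gPsi]
  ring

lemma fderiv_gPsi_single (y : E n) (i j : Fin n) :
    fderiv ℝ (gPsi (n := n) j) y (EuclideanSpace.single i 1)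
      = (if i = j then gPsi j y else 0) - gPsi i y * gPsi j y := by
  have hA : HasFDerivAt (fun y : E n => Real.exp (y j))
      (Real.exp (y j) • EuclideanSpace.proj (𝕜 := ℝ) j) y :=
    (Real.hasDerivAt_exp (y j)).comp_hasFDerivAt (f := fun y : E n => y j) y (hasF_proj j y)
  have hB : HasFDerivAt (fun y : E n => (1 + ∑ i, Real.exp (y i))⁻¹)
      ((-((1 + ∑ i, Real.exp (y i)) ^ 2)⁻¹) • ∑ i, Real.exp (y i) • EuclideanSpace.proj (𝕜 := ℝ) i) y :=
    (hasDerivAt_inv (expSum_pos y).ne').comp_hasFDerivAt y (hasF_expSum y)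
  have h6 := hA.mul hB
  have h7 : fderiv ℝ (gPsi (n := n) j) y = _ := h6.fderiv
  rw [h7]
  simp only [ContinuousLinearMap.add_apply, ContinuousLinearMap.smul_apply,
    ContinuousLinearMap.coe_sum', Finset.sum_apply, proj_single, smul_eq_mul, mul_ite,
    mul_zero, mul_one, Finset.sum_ite_eq, Finset.sum_ite_eq', Finset.mem_univ, if_true, gPsi]
  rw [sq, mul_inv]
  by_cases h : i = j <;> simp [h] <;> ring

end grads3


section hessians
variable (q : Fin (n+1) → ℝ)

def Uset (n : ℕ) : Set (E n) := {y | (∀ i, y i ≠ 0) ∧ 1 - ∑ i, y i ≠ 0}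

lemma cont_proj (i : Fin n) : Continuous (fun y : E n => y i) :=
  (EuclideanSpace.proj (𝕜 := ℝ) (ι := Fin n) i).continuous

lemma isOpen_Uset : IsOpen (Uset n) := by
  have h1 : Uset n = (⋂ i, {y : E n | y i ≠ 0}) ∩ {y : E n | 1 - ∑ i, y i ≠ 0} := by
    ext y; simp [Uset, Set.mem_iInter, Set.mem_setOf_eq]
  rw [h1]
  refine IsOpen.inter (isOpen_iInter_of_finite fun i => ?_) ?_
  · exact isOpen_ne.preimage (cont_proj i)
  · exact isOpen_ne.preimage (continuous_const.sub (continuous_finset_sum _ fun i _ => cont_proj i))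

lemma Leta_eq_on_U (hq : q ∈ simplex n) : ∀ y ∈ Uset n, Leta q y = Feta q y := by
  intro y hy
  have hlog : ∀ j : Fin n, Real.log (q j.castSucc / y j)
      = Real.log (q j.castSucc) - Real.log (y j) :=
    fun j => Real.log_div (hq.1 _).ne' (hy.1 j)
  simp only [Leta, KL, Feta, mixDist]
  rw [Fin.sum_univ_castSucc]
  simp only [Fin.snoc_castSucc, Fin.snoc_last]
  rw [Real.log_div (hq.1 _).ne' hy.2,
    Finset.sum_congr rfl (fun j _ => by rw [hlog j, mul_sub]),
    Finset.sum_sub_distrib, Fin.sum_univ_castSucc (f := fun i => q i * Real.log (q i))]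
  ring

lemma Ltheta_eq (hq : q ∈ simplex n) (θ : E n) :
    Ltheta q θ = ((∑ i, q i * Real.log (q i)) - ∑ k : Fin n, q k.castSucc * θ k) + psi θ := by
  have hw : (1 + ∑ i, Real.exp (θ i)) ≠ 0 := (expSum_pos θ).ne'
  have hlog : ∀ j : Fin n, Real.log (q j.castSucc / (Real.exp (θ j) / (1 + ∑ i, Real.exp (θ i))))
      = Real.log (q j.castSucc) - (θ j - Real.log (1 + ∑ i, Real.exp (θ i))) := by
    intro j
    rw [Real.log_div (hq.1 _).ne' (div_ne_zero (Real.exp_ne_zero _) hw),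
      Real.log_div (Real.exp_ne_zero _) hw, Real.log_exp]
  have hlast : Real.log (q (Fin.last n) / (1 / (1 + ∑ i, Real.exp (θ i))))
      = Real.log (q (Fin.last n)) - (Real.log 1 - Real.log (1 + ∑ i, Real.exp (θ i))) := by
    rw [Real.log_div (hq.1 _).ne' (div_ne_zero one_ne_zero hw), Real.log_div one_ne_zero hw]
  have hsum : ∑ j : Fin n, q j.castSucc = 1 - q (Fin.last n) := by
    have := hq.2
    rw [Fin.sum_univ_castSucc] at this
    linarith
  simp only [Ltheta, KL, expDist, psi]
  rw [Fin.sum_univ_castSucc]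
  simp only [Fin.snoc_castSucc, Fin.snoc_last]
  rw [hlast, Real.log_one,
    Finset.sum_congr rfl (fun j _ => by rw [hlog j, mul_sub, mul_sub]),
    Finset.sum_sub_distrib, Finset.sum_sub_distrib, ← Finset.sum_mul, hsum,
    Fin.sum_univ_castSucc (f := fun i => q i * Real.log (q i))]
  ring

lemma hasF_psi (y : E n) :
    HasFDerivAt (psi (n := n))
      ((1 + ∑ i, Real.exp (y i))⁻¹ • ∑ i, Real.exp (y i) • EuclideanSpace.proj (𝕜 := ℝ) i) y :=
  (Real.hasDerivAt_log (expSum_pos y).ne').comp_hasFDerivAt y (hasF_expSum y)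

lemma fderiv_Leta_single (hq : q ∈ simplex n) {y : E n} (hy : y ∈ Uset n) (j : Fin n) :
    fderiv ℝ (Leta q) y (EuclideanSpace.single j 1) = gEta q j y := by
  have hev : Leta q =ᶠ[nhds y] Feta q :=
    eventually_of_mem (isOpen_Uset.mem_nhds hy) (fun z hz => Leta_eq_on_U q hq z hz)
  rw [hev.fderiv_eq, fderiv_Feta_single q hy.1 hy.2 j, gEta]

lemma hess_Leta_apply (hq : q ∈ simplex n) {x : E n} (hx : x ∈ Uset n) (i j : Fin n) :
    hess (Leta q) x i j
      = (if i = j then q j.castSucc * ((x j) ^ 2)⁻¹ else 0)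
        + q (Fin.last n) * (((1 - ∑ k, x k) ^ 2)⁻¹) := by
  have hev : (fun y => fderiv ℝ (Leta q) y (EuclideanSpace.single j 1)) =ᶠ[nhds x] gEta q j :=
    eventually_of_mem (isOpen_Uset.mem_nhds hx) (fun z hz => fderiv_Leta_single q hq hz j)
  show fderiv ℝ (fun y => fderiv ℝ (Leta q) y (EuclideanSpace.single j 1)) x
      (EuclideanSpace.single i 1) = _
  rw [hev.fderiv_eq, fderiv_gEta_single q hx.1 hx.2 i j]

lemma hess_phi_apply {x : E n} (hx : x ∈ Uset n) (i j : Fin n) :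
    hess (phi (n := n)) x i j = (if i = j then (x j)⁻¹ else 0) + (1 - ∑ k, x k)⁻¹ := by
  have hev : (fun y => fderiv ℝ (phi (n := n)) y (EuclideanSpace.single j 1))
      =ᶠ[nhds x] gPhi (n := n) j :=
    eventually_of_mem (isOpen_Uset.mem_nhds hx) (fun z hz => fderiv_phi_single hz.1 hz.2 j)
  show fderiv ℝ (fun y => fderiv ℝ (phi (n := n)) y (EuclideanSpace.single j 1)) x
      (EuclideanSpace.single i 1) = _
  rw [hev.fderiv_eq, fderiv_gPhi_single hx.1 hx.2 i j]

lemma hess_psi_apply (x : E n) (i j : Fin n) :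
    hess (psi (n := n)) x i j = (if i = j then gPsi j x else 0) - gPsi i x * gPsi j x := by
  have hev : (fun y => fderiv ℝ (psi (n := n)) y (EuclideanSpace.single j 1)) = gPsi (n := n) j :=
    funext fun y => fderiv_psi_single y j
  show fderiv ℝ (fun y => fderiv ℝ (psi (n := n)) y (EuclideanSpace.single j 1)) x
      (EuclideanSpace.single i 1) = _
  rw [hev, fderiv_gPsi_single x i j]

lemma fderiv_Ltheta_single (hq : q ∈ simplex n) (y : E n) (j : Fin n) :
    fderiv ℝ (Ltheta q) y (EuclideanSpace.single j 1) = gPsi j y - q j.castSucc := by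
  have heq : Ltheta q = fun θ =>
      ((∑ i, q i * Real.log (q i)) - ∑ k : Fin n, q k.castSucc * θ k) + psi θ :=
    funext fun θ => Ltheta_eq q hq θ
  have hlin : HasFDerivAt (fun θ : E n => ∑ k : Fin n, q k.castSucc * θ k)
      (∑ k : Fin n, q k.castSucc • EuclideanSpace.proj (𝕜 := ℝ) k) y :=
    HasFDerivAt.fun_sum fun k _ => (hasF_proj k y).const_mul _
  have h6 := (hlin.const_sub (∑ i, q i * Real.log (q i))).add (hasF_psi y)
  rw [heq]
  rw [show (fun θ : E n => ((∑ i, q i * Real.log (q i)) - ∑ k : Fin n, q k.castSucc * θ k) + psi θ) = (fun θ : E n => ((∑ i, q i * Real.log (q i)) - ∑ k : Fin n, q k.castSucc * θ k)) + psi from rfl, h6.fderiv]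
  simp only [ContinuousLinearMap.add_apply, ContinuousLinearMap.neg_apply,
    ContinuousLinearMap.smul_apply, ContinuousLinearMap.coe_sum', Finset.sum_apply,
    proj_single, smul_eq_mul, mul_ite, mul_zero, mul_one, Finset.sum_ite_eq,
    Finset.sum_ite_eq', Finset.mem_univ, if_true, gPsi]
  ring

lemma hess_Ltheta_eq (hq : q ∈ simplex n) (x : E n) :
    hess (Ltheta q) x = hess (psi (n := n)) x := by
  ext i j
  have hev : (fun y => fderiv ℝ (Ltheta q) y (EuclideanSpace.single j 1))
      = fun y => gPsi j y - q j.castSucc :=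
    funext fun y => fderiv_Ltheta_single q hq y j
  have h2 : hess (Ltheta q) x i j
      = fderiv ℝ (fun y => gPsi (n := n) j y - q j.castSucc) x (EuclideanSpace.single i 1) := by
    show fderiv ℝ (fun y => fderiv ℝ (Ltheta q) y (EuclideanSpace.single j 1)) x
        (EuclideanSpace.single i 1) = _
    rw [hev]
  rw [h2, fderiv_sub_const, fderiv_gPsi_single x i j, hess_psi_apply x i j]

end hessians


lemma inv_sq_helper (a : ℝ) (ha : a ≠ 0) : a * ((a : ℝ) ^ 2)⁻¹ = a⁻¹ := by
  rw [sq, mul_inv, ← mul_assoc, mul_inv_cancel₀ ha, one_mul]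

lemma posDef_of_entries {n : ℕ} (M : Matrix (Fin n) (Fin n) ℝ) (d u : Fin n → ℝ)
    (hd : ∀ i, 0 < d i)
    (hM : ∀ i j, M i j = (if i = j then d j else 0) + u i * u j) : M.PosDef := by
  rw [Matrix.posDef_iff_dotProduct_mulVec]
  constructor
  · show M.conjTranspose = M
    ext i j
    simp only [Matrix.conjTranspose_apply, star_trivial, hM]
    by_cases h : i = j
    · subst h; ring
    · rw [if_neg h, if_neg (Ne.symm h)]; ring
  · intro x hx
    have key : dotProduct (star x) (M.mulVec x)
        = (∑ i, d i * (x i) ^ 2) + (∑ i, u i * x i) ^ 2 := by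
      have hsx : star x = x := by simp
      rw [hsx]
      simp only [dotProduct, Matrix.mulVec, hM]
      have inner : ∀ i, (∑ j, ((if i = j then d j else 0) + u i * u j) * x j)
          = d i * x i + u i * ∑ j, u j * x j := by
        intro i
        rw [Finset.sum_congr rfl (fun j _ => add_mul _ _ _), Finset.sum_add_distrib]
        congr 1
        · simp [ite_mul, Finset.sum_ite_eq]
        · rw [Finset.mul_sum]; exact Finset.sum_congr rfl fun j _ => by ring
      rw [Finset.sum_congr rfl fun i _ => by rw [inner i]]
      rw [Finset.sum_congr rfl fun i _ => mul_add (x i) (d i * x i) (u i * ∑ j, u j * x j),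
        Finset.sum_add_distrib]
      congr 1
      · exact Finset.sum_congr rfl fun i _ => by ring
      · rw [sq, Finset.sum_mul]
        exact Finset.sum_congr rfl fun i _ => by ring
    obtain ⟨i0, h0⟩ := Function.ne_iff.mp hx
    have h1 : 0 < d i0 * x i0 ^ 2 :=
      mul_pos (hd i0) ((sq_nonneg _).lt_of_ne (Ne.symm (pow_ne_zero 2 h0)))
    have h2 : d i0 * x i0 ^ 2 ≤ ∑ i, d i * (x i) ^ 2 :=
      Finset.single_le_sum (fun i _ => mul_nonneg (hd i).le (sq_nonneg _))
        (Finset.mem_univ i0)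
    have h3 := sq_nonneg (∑ i, u i * x i)
    rw [key]
    linarith


/-- Hessians of the loss at the optimum in both coordinates, their inverse
relationship and the local bounds. -/
theorem stmt_5 {n : ℕ} (q : Fin (n+1) → ℝ) (hq : q ∈ simplex n) :
    hess (Leta q) (etaCoord q) = hess phi (etaCoord q) ∧
    hess (Ltheta q) (thetaCoord q) = hess psi (thetaCoord q) ∧
    hess (Leta q) (etaCoord q) * hess (Ltheta q) (thetaCoord q) = 1 ∧
    (hess (Leta q) (etaCoord q) - (1 : Matrix (Fin n) (Fin n) ℝ)).PosDef ∧
    ((1 : Matrix (Fin n) (Fin n) ℝ) - hess (Ltheta q) (thetaCoord q)).PosDef := by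
  obtain ⟨hq1, hq2⟩ := hq
  set c : Fin n → ℝ := fun j => q j.castSucc with hc
  set L : ℝ := q (Fin.last n) with hLdef
  have hL : 0 < L := hq1 _
  have hcpos : ∀ j, 0 < c j := fun j => hq1 _
  have hsum : ∑ j : Fin n, c j = 1 - L := by
    have h := hq2
    rw [Fin.sum_univ_castSucc] at h
    have : ∑ j : Fin n, c j + L = 1 := h
    linarith
  have hclt : ∀ i : Fin n, c i < 1 := by
    intro i
    have hpair : c i + L ≤ 1 := by
      rw [← hq2, ← Finset.sum_pair (Fin.castSucc_lt_last i).ne]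
      exact Finset.sum_le_sum_of_subset_of_nonneg (Finset.subset_univ _)
        (fun j _ _ => (hq1 j).le)
    linarith
  have hsx : (1 : ℝ) - ∑ k, etaCoord q k = L := by
    have : ∑ k : Fin n, etaCoord q k = ∑ j : Fin n, c j := rfl
    rw [this, hsum]; ring
  have hxU : etaCoord q ∈ Uset n :=
    ⟨fun i => (hq1 _).ne', by rw [hsx]; exact hL.ne'⟩
  have hAe : ∀ i j, hess (Leta q) (etaCoord q) i j
      = (if i = j then (c j)⁻¹ else 0) + L⁻¹ := by
    intro i j
    rw [hess_Leta_apply q ⟨hq1, hq2⟩ hxU i j, hsx, inv_sq_helper L hL.ne']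
    congr 1
    by_cases h : i = j
    · rw [if_pos h, if_pos h]
      exact inv_sq_helper (c j) (hcpos j).ne'
    · rw [if_neg h, if_neg h]
  have hAphi : ∀ i j, hess (phi (n := n)) (etaCoord q) i j
      = (if i = j then (c j)⁻¹ else 0) + L⁻¹ := by
    intro i j
    rw [hess_phi_apply hxU i j, hsx]
    rfl
  have hexp : ∀ j : Fin n, Real.exp (thetaCoord q j) = c j / L := by
    intro j
    have : thetaCoord q j = Real.log (c j / L) := rfl
    rw [this, Real.exp_log (div_pos (hcpos j) hL)]
  have hw : 1 + ∑ i, Real.exp (thetaCoord q i) = L⁻¹ := by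
    rw [Finset.sum_congr rfl fun i _ => hexp i, ← Finset.sum_div, hsum]
    field_simp
    ring
  have hgPsi : ∀ j, gPsi j (thetaCoord q) = c j := by
    intro j
    show Real.exp (thetaCoord q j) * (1 + ∑ i, Real.exp (thetaCoord q i))⁻¹ = c j
    rw [hexp j, hw, inv_inv, div_mul_cancel₀ _ hL.ne']
  have hBe : ∀ i j, hess (psi (n := n)) (thetaCoord q) i j
      = (if i = j then c j else 0) - c i * c j := by
    intro i j
    simp only [hess_psi_apply (thetaCoord q) i j, hgPsi]
  have hLth := hess_Ltheta_eq q ⟨hq1, hq2⟩ (thetaCoord q)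
  refine ⟨?_, hLth, ?_, ?_, ?_⟩
  · ext i j
    rw [hAe i j, hAphi i j]
  · ext i k
    rw [Matrix.mul_apply]
    rw [Finset.sum_congr rfl fun j _ => by rw [hLth, hAe i j, hBe j k]]
    have key : ∀ j : Fin n, ((if i = j then (c j)⁻¹ else 0) + L⁻¹)
        * ((if j = k then c k else 0) - c j * c k)
        = ((if i = j then (if j = k then (c j)⁻¹ * c k else 0) else 0)
          - (if i = j then (c j)⁻¹ * (c j * c k) else 0))
          + ((if j = k then L⁻¹ * c k else 0) - L⁻¹ * (c j * c k)) := by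
      intro j
      by_cases h1 : i = j
      · subst h1
        by_cases h2 : i = k <;> simp [h2] <;> ring
      · by_cases h2 : j = k
        · subst h2
          simp [h1] <;> ring
        · simp [h1, h2] <;> ring
    rw [Finset.sum_congr rfl fun j _ => key j, Finset.sum_add_distrib,
      Finset.sum_sub_distrib, Finset.sum_sub_distrib,
      Finset.sum_ite_eq, Finset.sum_ite_eq, Finset.sum_ite_eq']
    have hlast : ∑ j : Fin n, L⁻¹ * (c j * c k) = L⁻¹ * ((1 - L) * c k) := by
      rw [← Finset.mul_sum, ← Finset.sum_mul, hsum]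
    rw [hlast, Matrix.one_apply]
    simp only [Finset.mem_univ, if_true]
    by_cases h : i = k
    · subst h
      rw [if_pos rfl, if_pos rfl]
      field_simp
      rw [mul_div_cancel_left₀ _ (hcpos i).ne']
      ring
    · rw [if_neg h, if_neg h]
      field_simp
      rw [mul_div_cancel_left₀ _ (hcpos i).ne']
      ring
  · have hM : ∀ i j, (hess (Leta q) (etaCoord q) - 1) i j
        = (if i = j then (c j)⁻¹ - 1 else 0)
          + Real.sqrt L⁻¹ * Real.sqrt L⁻¹ := by
      intro i j
      rw [Matrix.sub_apply, hAe i j, Matrix.one_apply,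
        Real.mul_self_sqrt (by positivity)]
      by_cases h : i = j <;> simp [h] <;> ring
    exact posDef_of_entries _ _ _
      (fun i => by
        have h1 : 1 < (c i)⁻¹ := (one_lt_inv₀ (hcpos i)).mpr (hclt i)
        linarith) hM
  · have hM : ∀ i j, ((1 : Matrix (Fin n) (Fin n) ℝ) - hess (Ltheta q) (thetaCoord q)) i j
        = (if i = j then 1 - c j else 0) + c i * c j := by
      intro i j
      rw [Matrix.sub_apply, hLth, hBe i j, Matrix.one_apply]
      by_cases h : i = j <;> simp [h] <;> ring
    exact posDef_of_entries _ _ _ (fun i => by have := hclt i; linarith) hM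


end
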